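/- Let W=(S,R,π) be a Kripke structure, let ψ₁,…,ψ_ℓ be dependence atoms (each of the form dep(p₁,…,pₙ;q) with n ≥ 0), and let T⊆S be a finite team with |T| < 2^ℓ. Then for every k with 1 ≤ k ≤ ℓ there exists a subteam T_k ⊆ T such that W,T_k ⊨ ψ₁ ∨ ψ₂ ∨ … ∨ ψ_k (dependence disjunction) and |T ∖ T_k| < 2^{ℓ−k}. In particular (for k=ℓ), W,T ⊨ ψ₁ ∨ … ∨ ψ_ℓ. -/

import Mathlib

/-- Syntax of modal dependence logic (MDL) over atomic propositions `AP`. -/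
inductive MDL (AP : Type) : Type where
  | top   : MDL AP                       -- ⊤
  | bot   : MDL AP                       -- ⊥
  | atom  : AP → MDL AP                  -- p
  | natom : AP → MDL AP                  -- ¬p
  | dep   : List AP → AP → MDL AP        -- dep(p₁,…,pₙ;q)
  | ndep  : List AP → AP → MDL AP        -- ¬dep(p₁,…,pₙ;q)
  | and   : MDL AP → MDL AP → MDL AP     -- ∧
  | dor   : MDL AP → MDL AP → MDL AP     -- dependence disjunction ∨
  | cor   : MDL AP → MDL AP → MDL AP     -- classical disjunction ⊻
  | box   : MDL AP → MDL AP              -- □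
  | dia   : MDL AP → MDL AP              -- ◇

/-- Team semantics of MDL over a Kripke structure `(S, R, π)`. -/
def MDL.sat {S AP : Type} (R : S → S → Prop) (π : S → Set AP) :
    MDL AP → Set S → Prop
  | .top, _ => True
  | .bot, T => T = ∅
  | .atom p, T => ∀ s ∈ T, p ∈ π s
  | .natom p, T => ∀ s ∈ T, p ∉ π s
  | .dep ps q, T => ∀ s₁ ∈ T, ∀ s₂ ∈ T,
      (∀ p ∈ ps, (p ∈ π s₁ ↔ p ∈ π s₂)) → (q ∈ π s₁ ↔ q ∈ π s₂)
  | .ndep _ _, T => T = ∅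
  | .and φ ψ, T => MDL.sat R π φ T ∧ MDL.sat R π ψ T
  | .dor φ ψ, T => ∃ T₁ T₂ : Set S, T = T₁ ∪ T₂ ∧ MDL.sat R π φ T₁ ∧ MDL.sat R π ψ T₂
  | .cor φ ψ, T => MDL.sat R π φ T ∨ MDL.sat R π ψ T
  | .box φ, T => MDL.sat R π φ {s' | ∃ s ∈ T, R s s'}
  | .dia φ, T => ∃ T' : Set S, MDL.sat R π φ T' ∧ ∀ s ∈ T, ∃ s' ∈ T', R s s'

/-- Big dependence disjunction ⋁ of a list of formulas (empty disjunction is ⊥). -/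
def MDL.bigDor {AP : Type} : List (MDL AP) → MDL AP
  | [] => .bot
  | [φ] => φ
  | φ :: ψ :: rest => .dor φ (MDL.bigDor (ψ :: rest))

/-- Big conjunction ⋀ of a list of formulas (empty conjunction is ⊤). -/
def MDL.bigAnd {AP : Type} : List (MDL AP) → MDL AP
  | [] => .top
  | [φ] => φ
  | φ :: ψ :: rest => .and φ (MDL.bigAnd (ψ :: rest))

/-- `◇^k φ` : `k` nested ◇ operators. -/
def MDL.diaIter {AP : Type} : ℕ → MDL AP → MDL AP
  | 0, φ => φ
  | n + 1, φ => .dia (MDL.diaIter n φ)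

/-- `□^k φ` : `k` nested □ operators. -/
def MDL.boxIter {AP : Type} : ℕ → MDL AP → MDL AP
  | 0, φ => φ
  | n + 1, φ => .box (MDL.boxIter n φ)

/-- A CNF formula with `m` clauses over `n` variables: `C i j = some true` iff
variable `x_j` occurs positively in clause `C_i`, `some false` iff it occurs
negatively, `none` iff it does not occur (each variable occurs at most once
per clause). -/
def CNF.Satisfiable {m n : ℕ} (C : Fin m → Fin n → Option Bool) : Prop :=
  ∃ θ : Fin n → Bool, ∀ i : Fin m, ∃ j : Fin n, C i j = some (θ j)


lemma depSplit {S AP : Type} (π : S → Set AP) (ps : List AP) (q : AP) :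
    ∀ n (U : Set S), U.Finite → U.ncard ≤ n →
      ∃ A ⊆ U,
        (∀ s₁ ∈ A, ∀ s₂ ∈ A, (∀ p ∈ ps, (p ∈ π s₁ ↔ p ∈ π s₂)) → (q ∈ π s₁ ↔ q ∈ π s₂)) ∧
        2 * (U \ A).ncard ≤ U.ncard := by
  intro n
  induction n with
  | zero =>
    intro U hU hle
    refine ⟨∅, by simp, by simp, ?_⟩
    have : U = ∅ := (Set.ncard_eq_zero hU).1 (Nat.le_zero.1 hle)
    simp [this]
  | succ n ih =>
    intro U hU hle
    rcases U.eq_empty_or_nonempty with rfl | ⟨s, hs⟩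
    · exact ⟨∅, by simp, by simp, by simp⟩
    · set pat : S → Set AP := fun t => {p | p ∈ ps ∧ p ∈ π t} with hpat
      set C : Set S := {t ∈ U | pat t = pat s} with hC
      set P : Set S := {t ∈ C | q ∈ π t} with hP
      set N : Set S := {t ∈ C | q ∉ π t} with hN
      have hCU : C ⊆ U := fun t ht => ht.1
      have hPC : P ⊆ C := fun t ht => ht.1
      have hNC : N ⊆ C := fun t ht => ht.1
      have hCfin : C.Finite := hU.subset hCU
      have hPfin : P.Finite := hCfin.subset hPC
      have hNfin : N.Finite := hCfin.subset hNC
      have hsC : s ∈ C := ⟨hs, rfl⟩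
      -- choose Big/Small
      obtain ⟨Big, Small, hBq, hcardBS, hCsplit, hBSdisj⟩ :
          ∃ Big Small : Set S, (∀ t₁ ∈ Big, ∀ t₂ ∈ Big, (q ∈ π t₁ ↔ q ∈ π t₂)) ∧
            Small.ncard ≤ Big.ncard ∧ C = Big ∪ Small ∧ Disjoint Big Small := by
        by_cases h : N.ncard ≤ P.ncard
        · refine ⟨P, N, ?_, h, ?_, ?_⟩
          · intro t₁ h₁ t₂ h₂; simp [h₁.2, h₂.2]
          · ext t; simp only [Set.mem_union, hP, hN, Set.mem_setOf_eq]; tauto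
          · rw [Set.disjoint_left]; intro t ht ht'; exact ht'.2 ht.2
        · refine ⟨N, P, ?_, le_of_not_ge h, ?_, ?_⟩
          · intro t₁ h₁ t₂ h₂; simp [h₁.2, h₂.2]
          · ext t; simp only [Set.mem_union, hP, hN, Set.mem_setOf_eq]; tauto
          · rw [Set.disjoint_left]; intro t ht ht'; exact ht.2 ht'.2
      have hBigC : Big ⊆ C := fun t ht => hCsplit ▸ Set.mem_union_left _ ht
      have hSmallC : Small ⊆ C := fun t ht => hCsplit ▸ Set.mem_union_right _ ht
      -- induction on U \ C
      have hUCfin : (U \ C).Finite := hU.diff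
      have hUCcard : (U \ C).ncard ≤ n := by
        have h1 : (U \ C).ncard < U.ncard := by
          apply Set.ncard_lt_ncard _ hU
          constructor
          · exact Set.diff_subset
          · intro hsub
            exact (hsub hs).2 hsC
        omega
      obtain ⟨A', hA'sub, hA'sat, hA'card⟩ := ih (U \ C) hUCfin hUCcard
      refine ⟨Big ∪ A', ?_, ?_, ?_⟩
      · exact Set.union_subset (hBigC.trans hCU) (hA'sub.trans Set.diff_subset)
      · intro t₁ h₁ t₂ h₂ hsame
        have hpateq : pat t₁ = pat t₂ := by
          ext p; simp only [hpat, Set.mem_setOf_eq]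
          constructor
          · rintro ⟨hp, hm⟩; exact ⟨hp, (hsame p hp).1 hm⟩
          · rintro ⟨hp, hm⟩; exact ⟨hp, (hsame p hp).2 hm⟩
        rcases h₁ with h₁ | h₁ <;> rcases h₂ with h₂ | h₂
        · exact hBq t₁ h₁ t₂ h₂
        · exact absurd (show t₂ ∈ C from ⟨(hA'sub h₂).1, hpateq.symm.trans (hBigC h₁).2⟩) (hA'sub h₂).2
        · exact absurd (show t₁ ∈ C from ⟨(hA'sub h₁).1, hpateq.trans (hBigC h₂).2⟩) (hA'sub h₁).2
        · exact hA'sat t₁ h₁ t₂ h₂ hsame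
      · -- cardinality
        have hsub : U \ (Big ∪ A') ⊆ Small ∪ ((U \ C) \ A') := by
          intro x hx
          obtain ⟨hxU, hxn⟩ := hx
          rw [Set.mem_union] at hxn
          push_neg at hxn
          by_cases hxC : x ∈ C
          · left
            rcases (hCsplit ▸ hxC : x ∈ Big ∪ Small) with h | h
            · exact absurd h hxn.1
            · exact h
          · exact Or.inr ⟨⟨hxU, hxC⟩, hxn.2⟩
        have hfin2 : (Small ∪ ((U \ C) \ A')).Finite :=
          (hCfin.subset hSmallC).union hUCfin.diff
        have h1 : (U \ (Big ∪ A')).ncard ≤ Small.ncard + ((U \ C) \ A').ncard :=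
          le_trans (Set.ncard_le_ncard hsub hfin2) (Set.ncard_union_le _ _)
        have hCcard : Big.ncard + Small.ncard = C.ncard := by
          rw [hCsplit, Set.ncard_union_eq hBSdisj (hCfin.subset hBigC) (hCfin.subset hSmallC)]
        have hUcard : (U \ C).ncard + C.ncard = U.ncard :=
          Set.ncard_diff_add_ncard_of_subset hCU hU
        omega

lemma dorSplit {S AP : Type} (R : S → S → Prop) (π : S → Set AP) :
    ∀ (L : List (List AP × AP)), L ≠ [] → ∀ U : Set S, U.Finite →
      ∃ A ⊆ U,
        MDL.sat R π (MDL.bigDor (L.map fun x => MDL.dep x.1 x.2)) A ∧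
        2 ^ L.length * (U \ A).ncard ≤ U.ncard := by
  intro L
  induction L with
  | nil => intro h; exact absurd rfl h
  | cons x rest ih =>
    intro _ U hU
    obtain ⟨A₁, hA₁sub, hA₁sat, hA₁card⟩ := depSplit π x.1 x.2 U.ncard U hU le_rfl
    rcases rest with _ | ⟨y, rest'⟩
    · refine ⟨A₁, hA₁sub, ?_, ?_⟩
      · exact hA₁sat
      · simpa using hA₁card
    · obtain ⟨A', hA'sub, hA'sat, hA'card⟩ :=
        ih (by simp) (U \ A₁) hU.diff
      refine ⟨A₁ ∪ A', Set.union_subset hA₁sub (hA'sub.trans Set.diff_subset), ?_, ?_⟩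
      · exact ⟨A₁, A', rfl, hA₁sat, hA'sat⟩
      · have hsub : U \ (A₁ ∪ A') ⊆ (U \ A₁) \ A' := by
          intro z hz
          exact ⟨⟨hz.1, fun h => hz.2 (Set.mem_union_left _ h)⟩,
            fun h => hz.2 (Set.mem_union_right _ h)⟩
        have h1 : (U \ (A₁ ∪ A')).ncard ≤ ((U \ A₁) \ A').ncard :=
          Set.ncard_le_ncard hsub hU.diff.diff
        have hlen : (2:ℕ) ^ (x :: y :: rest').length = 2 * 2 ^ (y :: rest').length := by
          rw [List.length_cons, pow_succ]; ring
        calc 2 ^ (x :: y :: rest').length * (U \ (A₁ ∪ A')).ncard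
            = 2 * (2 ^ (y :: rest').length * (U \ (A₁ ∪ A')).ncard) := by rw [hlen]; ring
          _ ≤ 2 * (2 ^ (y :: rest').length * ((U \ A₁) \ A').ncard) := by
              have := Nat.mul_le_mul_left (2 ^ (y :: rest').length) h1
              omega
          _ ≤ 2 * (U \ A₁).ncard := by omega
          _ ≤ U.ncard := hA₁card

/-- Let `ψ_{i+1} = dep(ps i; q i)` (`i : Fin ℓ`) be dependence
atoms and `T` a finite team with `|T| < 2^ℓ`.  Then for every `1 ≤ k ≤ ℓ`
there is a subteam `T_k ⊆ T` with `W, T_k ⊨ ψ₁ ∨ … ∨ ψ_k` and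
`|T \ T_k| < 2^{ℓ-k}`; in particular `W, T ⊨ ψ₁ ∨ … ∨ ψ_ℓ`. -/
theorem stmt9 {S AP : Type} (R : S → S → Prop) (π : S → Set AP)
    (ℓ : ℕ) (ps : Fin ℓ → List AP) (q : Fin ℓ → AP)
    (T : Set S) (hT : T.Finite) (hcard : T.ncard < 2 ^ ℓ) :
    (∀ k : ℕ, 1 ≤ k → k ≤ ℓ →
      ∃ Tk ⊆ T,
        MDL.sat R π
          (MDL.bigDor (((List.finRange ℓ).take k).map fun i => MDL.dep (ps i) (q i)))
          Tk ∧
        (T \ Tk).ncard < 2 ^ (ℓ - k)) ∧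
    MDL.sat R π
      (MDL.bigDor ((List.finRange ℓ).map fun i => MDL.dep (ps i) (q i))) T := by
  have key : ∀ k : ℕ, 1 ≤ k → k ≤ ℓ →
      ∃ Tk ⊆ T,
        MDL.sat R π
          (MDL.bigDor (((List.finRange ℓ).take k).map fun i => MDL.dep (ps i) (q i)))
          Tk ∧
        (T \ Tk).ncard < 2 ^ (ℓ - k) := by
    intro k hk1 hkℓ
    set L : List (List AP × AP) :=
      ((List.finRange ℓ).take k).map (fun i => (ps i, q i)) with hL
    have hLlen : L.length = k := by
      simp [hL, List.length_take, Nat.min_eq_left hkℓ]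
    have hLne : L ≠ [] := by
      intro h
      rw [h] at hLlen
      simp at hLlen
      omega
    obtain ⟨Tk, hsub, hsat, hcard'⟩ := dorSplit R π L hLne T hT
    have hmap : L.map (fun x => MDL.dep x.1 x.2)
        = ((List.finRange ℓ).take k).map fun i => MDL.dep (ps i) (q i) := by
      rw [hL, List.map_map]
      rfl
    refine ⟨Tk, hsub, by rwa [hmap] at hsat, ?_⟩
    rw [hLlen] at hcard'
    have h2 : 2 ^ k * (T \ Tk).ncard < 2 ^ ℓ := lt_of_le_of_lt hcard' hcard
    have h3 : 2 ^ ℓ = 2 ^ k * 2 ^ (ℓ - k) := by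
      rw [← pow_add]
      congr 1
      omega
    rw [h3] at h2
    exact lt_of_mul_lt_mul_left h2 (Nat.zero_le _)
  refine ⟨key, ?_⟩
  rcases Nat.eq_zero_or_pos ℓ with rfl | hpos
  · have : T = ∅ := by
      have : T.ncard = 0 := by omega
      exact (Set.ncard_eq_zero hT).1 this
    simp [this, MDL.bigDor, MDL.sat]
  · obtain ⟨Tk, hsub, hsat, hcard'⟩ := key ℓ hpos le_rfl
    have h0 : (T \ Tk).ncard = 0 := by simpa using Nat.lt_one_iff.1 (by simpa using hcard')
    have hTTk : T = Tk := by
      have hdiff : T \ Tk = ∅ := (Set.ncard_eq_zero hT.diff).1 h0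
      apply Set.Subset.antisymm _ hsub
      intro z hz
      by_contra h
      have hmem : z ∈ T \ Tk := ⟨hz, h⟩
      rw [hdiff] at hmem
      exact hmem
    rw [hTTk]
    rwa [List.take_of_length_le (by simp)] at hsat
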